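/- Let r ≥ 1 be an integer and let a_0, a_1, ..., a_r and d_0, ..., d_{r−1} be nonnegative real numbers such that for every real q > 0 and every 1 ≤ j ≤ r, a_j ≤ (1+q) a_{j−1} + (1 + 1/q) d_{j−1}. Then a_r ≤ e · a_0 + e (r+1) Σ_{j=0}^{r−1} d_j, where e is Euler's number. -/
import Mathlib


open Finset

/-- **Cross-round recursion bound.**
If nonnegative reals satisfy, for every `q > 0` and `1 ≤ j ≤ r`,
`a j ≤ (1+q) a (j−1) + (1 + 1/q) d (j−1)`, then
`a r ≤ e · a 0 + e (r+1) ∑_{j=0}^{r−1} d j`. -/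
theorem stmt8 (r : ℕ) (hr : 1 ≤ r) (a dd : ℕ → ℝ)
    (ha : ∀ j ≤ r, 0 ≤ a j) (hd : ∀ j < r, 0 ≤ dd j)
    (hrec : ∀ q : ℝ, 0 < q → ∀ j, 1 ≤ j → j ≤ r →
      a j ≤ (1 + q) * a (j - 1) + (1 + 1 / q) * dd (j - 1)) :
    a r ≤ Real.exp 1 * a 0
      + Real.exp 1 * ((r : ℝ) + 1) * ∑ j ∈ Finset.range r, dd j := by
  have hr0 : (0:ℝ) < r := by exact_mod_cast hr
  set q : ℝ := 1 / r with hqdef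
  have hq : 0 < q := by positivity
  have hqinv : 1 / q = (r:ℝ) := by rw [hqdef, one_div_one_div]
  have hc1 : (1:ℝ) ≤ 1 + q := by linarith
  have sumnn : ∀ k ≤ r, 0 ≤ ∑ j ∈ range k, dd j := by
    intro k hk
    exact Finset.sum_nonneg fun j hj => hd j (lt_of_lt_of_le (mem_range.mp hj) hk)
  have key : ∀ k ≤ r, a k ≤ (1+q)^k * (a 0 + (1+(r:ℝ)) * ∑ j ∈ range k, dd j) := by
    intro k
    induction k with
    | zero => intro _; simp
    | succ n ih =>
      intro hk
      have hn : n ≤ r := le_of_lt hk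
      have h1 := hrec q hq (n+1) (by omega) hk
      simp only [Nat.add_sub_cancel] at h1
      have hdn : 0 ≤ dd n := hd n hk
      have hAn := ih hn
      have hpow : (0:ℝ) < (1+q)^n := by positivity
      have h2 : a (n+1) ≤ (1+q)^(n+1) * (a 0 + (1+(r:ℝ)) * ∑ j ∈ range n, dd j)
          + (1+(r:ℝ)) * dd n := by
        have := mul_le_mul_of_nonneg_left hAn (le_of_lt (by linarith : (0:ℝ) < 1+q))
        calc a (n+1) ≤ (1 + q) * a n + (1 + 1/q) * dd n := h1
          _ = (1 + q) * a n + (1 + (r:ℝ)) * dd n := by rw [hqinv]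
          _ ≤ (1+q) * ((1+q)^n * (a 0 + (1+(r:ℝ)) * ∑ j ∈ range n, dd j))
              + (1+(r:ℝ)) * dd n := by linarith
          _ = (1+q)^(n+1) * (a 0 + (1+(r:ℝ)) * ∑ j ∈ range n, dd j)
              + (1+(r:ℝ)) * dd n := by ring
      have hp1 : (1:ℝ) ≤ (1+q)^(n+1) := one_le_pow₀ hc1
      have h3 : (1+(r:ℝ)) * dd n ≤ (1+q)^(n+1) * ((1+(r:ℝ)) * dd n) := by
        nlinarith [mul_nonneg (by linarith : (0:ℝ) ≤ 1+(r:ℝ)) hdn]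
      calc a (n+1) ≤ (1+q)^(n+1) * (a 0 + (1+(r:ℝ)) * ∑ j ∈ range n, dd j)
            + (1+(r:ℝ)) * dd n := h2
        _ ≤ (1+q)^(n+1) * (a 0 + (1+(r:ℝ)) * ∑ j ∈ range n, dd j)
            + (1+q)^(n+1) * ((1+(r:ℝ)) * dd n) := by linarith
        _ = (1+q)^(n+1) * (a 0 + (1+(r:ℝ)) * (∑ j ∈ range n, dd j + dd n)) := by ring
        _ = (1+q)^(n+1) * (a 0 + (1+(r:ℝ)) * ∑ j ∈ range (n+1), dd j) := by
            rw [Finset.sum_range_succ]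
  have hkey := key r le_rfl
  have hexp : (1+q)^r ≤ Real.exp 1 := by
    have h1 : (1+q) ≤ Real.exp q := by
      have := Real.add_one_le_exp q; linarith
    calc (1+q)^r ≤ (Real.exp q)^r := pow_le_pow_left₀ (by linarith) h1 r
      _ = Real.exp (q * r) := by rw [← Real.exp_nat_mul]; ring_nf
      _ = Real.exp 1 := by rw [hqdef]; congr 1; field_simp
  have hbase : 0 ≤ a 0 + (1+(r:ℝ)) * ∑ j ∈ range r, dd j := by
    have := sumnn r le_rfl
    have := ha 0 (by omega)
    nlinarith
  calc a r ≤ (1+q)^r * (a 0 + (1+(r:ℝ)) * ∑ j ∈ range r, dd j) := hkey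
    _ ≤ Real.exp 1 * (a 0 + (1+(r:ℝ)) * ∑ j ∈ range r, dd j) :=
        mul_le_mul_of_nonneg_right hexp hbase
    _ = Real.exp 1 * a 0 + Real.exp 1 * ((r:ℝ)+1) * ∑ j ∈ range r, dd j := by ring
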